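/- Let {x_n} be a sequence of nonzero vectors in H admitting an orthogonal decomposition {x_n} = ∪_i {x_n^i} with mutually orthogonal closed spans, such that sup_i dim(span-closure{x_n^i}) < ∞. If sup_i |{x_n^i}| = ∞ (the cardinalities of the blocks are unbounded), then {x_n/‖x_n‖} is not a Bessel sequence. -/

import Mathlib

open scoped ComplexInnerProductSpace ENNReal
open Filter Topology

noncomputable section

variable {E : Type*} [NormedAddCommGroup E] [InnerProductSpace ℂ E]

/-- `y` is a Bessel sequence with Bessel bound `B`:
`∑ᵢ |⟪z, yᵢ⟫|² ≤ B‖z‖²` for all `z` (sum taken in `ℝ≥0∞` so that divergence is handled). -/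
def BesselWith {ι : Type*} (y : ι → E) (B : ℝ) : Prop :=
  ∀ z : E, ∑' i, ENNReal.ofReal (‖⟪z, y i⟫‖ ^ 2) ≤ ENNReal.ofReal (B * ‖z‖ ^ 2)

/-- `y` satisfies the lower frame condition with bound `A`:
`A‖z‖² ≤ ∑ᵢ |⟪z, yᵢ⟫|²` for all `z`. -/
def LowerFrameWith {ι : Type*} (y : ι → E) (A : ℝ) : Prop :=
  ∀ z : E, ENNReal.ofReal (A * ‖z‖ ^ 2) ≤ ∑' i, ENNReal.ofReal (‖⟪z, y i⟫‖ ^ 2)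

/-- `y` is a frame with frame bounds `A ≤ B`. -/
def FrameWith {ι : Type*} (y : ι → E) (A B : ℝ) : Prop :=
  0 < A ∧ A ≤ B ∧ LowerFrameWith y A ∧ BesselWith y B

/-- The normalized sequence `yᵢ/‖yᵢ‖`. -/
def normalizeSeq {ι : Type*} (y : ι → E) : ι → E := fun i => (‖y i‖ : ℂ)⁻¹ • y i

theorem parseval_aux {V : Type*} [NormedAddCommGroup V] [InnerProductSpace ℂ V]
    {ι : Type*} [Fintype ι] (b : OrthonormalBasis ι ℂ V) (v : V) :
    ∑ k, ‖⟪b k, v⟫‖ ^ 2 = ‖v‖ ^ 2 := by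
  have h := b.sum_inner_mul_inner v v
  have h2 : ((∑ k, ‖⟪b k, v⟫‖ ^ 2 : ℝ) : ℂ) = ((‖v‖ ^ 2 : ℝ) : ℂ) := by
    calc ((∑ k, ‖⟪b k, v⟫‖ ^ 2 : ℝ) : ℂ) = ∑ k, ((‖⟪b k, v⟫‖ ^ 2 : ℝ) : ℂ) := by push_cast; ring
      _ = ∑ k, ⟪v, b k⟫ * ⟪b k, v⟫ := Finset.sum_congr rfl fun k _ => by
            rw [← inner_conj_symm (b k) v, RCLike.norm_conj, RCLike.mul_conj]; norm_cast
      _ = ⟪v, v⟫ := h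
      _ = ((‖v‖ ^ 2 : ℝ) : ℂ) := by rw [inner_self_eq_norm_sq_to_K]; norm_cast
  exact_mod_cast h2

/-- If a sequence of nonzero vectors admits an orthogonal decomposition whose
blocks span subspaces of uniformly bounded dimension but whose block cardinalities are
unbounded, then the normalized sequence is not a Bessel sequence. -/
theorem stmt2 {H : Type*} [NormedAddCommGroup H] [InnerProductSpace ℂ H]
    (x : ℕ → H) (hx : ∀ n, x n ≠ 0) (S : ℕ → Set ℕ)
    (hpart : ∀ n, ∃! i, n ∈ S i)
    (horth : ∀ i j, i ≠ j →
      ∀ u ∈ (Submodule.span ℂ (x '' S i)).topologicalClosure,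
      ∀ v ∈ (Submodule.span ℂ (x '' S j)).topologicalClosure, ⟪u, v⟫ = 0)
    (D : ℕ) (hfd : ∀ i, FiniteDimensional ℂ (Submodule.span ℂ (x '' S i)))
    (hdim : ∀ i, Module.finrank ℂ (Submodule.span ℂ (x '' S i)) ≤ D)
    (hunb : ∀ K : ℕ, ∃ i, (K : ℕ∞) ≤ (S i).encard) :
    ¬ ∃ B : ℝ, BesselWith (normalizeSeq x) B := by
  rintro ⟨B, hB⟩
  have hnorm : ∀ n, ‖normalizeSeq x n‖ = 1 := by
    intro n
    have h0 : ‖x n‖ ≠ 0 := norm_ne_zero_iff.mpr (hx n)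
    simp only [normalizeSeq, norm_smul, norm_inv, Complex.norm_real, Real.norm_eq_abs,
      abs_norm]
    field_simp
  have hB1 : (1 : ℝ) ≤ B := by
    have h1 := hB (normalizeSeq x 0)
    have h2 : (1 : ℝ≥0∞) ≤ ENNReal.ofReal (B * ‖normalizeSeq x 0‖ ^ 2) := by
      refine le_trans ?_ (le_trans (ENNReal.le_tsum 0) h1)
      rw [inner_self_eq_norm_sq_to_K (𝕜 := ℂ), hnorm 0]
      norm_num
    rw [hnorm 0] at h2
    norm_num at h2
    exact h2
  have hB0 : (0 : ℝ) ≤ B := by linarith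
  set N : ℕ := ⌈B⌉₊ * D + 1 with hN
  obtain ⟨i, hi⟩ := hunb N
  obtain ⟨T, hTsub, hTenc⟩ := Set.exists_subset_encard_eq hi
  have hTfin : T.Finite := Set.finite_of_encard_eq_coe hTenc
  set Tf : Finset ℕ := hTfin.toFinset with hTf
  have hTcard : Tf.card = N := by
    have := hTfin.encard_eq_coe_toFinset_card
    rw [hTenc] at this
    exact_mod_cast this.symm
  set V := Submodule.span ℂ (x '' S i) with hV
  haveI := hfd i
  set d := Module.finrank ℂ V with hd
  set b := stdOrthonormalBasis ℂ V with hb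
  have hmem : ∀ n ∈ Tf, normalizeSeq x n ∈ V := by
    intro n hn
    have hns : n ∈ S i := hTsub (hTfin.mem_toFinset.mp hn)
    exact V.smul_mem _ (Submodule.subset_span ⟨n, hns, rfl⟩)
  have key : ∀ n ∈ Tf, ∑ k, ‖⟪((b k : V) : H), normalizeSeq x n⟫‖ ^ 2 = 1 := by
    intro n hn
    calc ∑ k, ‖⟪((b k : V) : H), normalizeSeq x n⟫‖ ^ 2
        = ∑ k, ‖⟪b k, (⟨normalizeSeq x n, hmem n hn⟩ : V)⟫‖ ^ 2 := rfl
      _ = ‖(⟨normalizeSeq x n, hmem n hn⟩ : V)‖ ^ 2 := parseval_aux b _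
      _ = 1 := by
          rw [show ‖(⟨normalizeSeq x n, hmem n hn⟩ : V)‖ = ‖normalizeSeq x n‖ from rfl,
            hnorm n]; norm_num
  have hsum : ∑ k, ∑ n ∈ Tf, ‖⟪((b k : V) : H), normalizeSeq x n⟫‖ ^ 2 = (N : ℝ) := by
    rw [Finset.sum_comm, Finset.sum_congr rfl key]
    simp [hTcard]
  have hTne : Tf.Nonempty := Finset.card_pos.mp (by rw [hTcard]; omega)
  obtain ⟨n0, hn0⟩ := hTne
  have hdpos : 0 < d := by
    have hne : (⟨normalizeSeq x n0, hmem n0 hn0⟩ : V) ≠ 0 := by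
      intro hc
      have h0 : ‖(⟨normalizeSeq x n0, hmem n0 hn0⟩ : V)‖ = 0 := by rw [hc]; simp
      rw [show ‖(⟨normalizeSeq x n0, hmem n0 hn0⟩ : V)‖ = ‖normalizeSeq x n0‖ from rfl,
        hnorm n0] at h0
      norm_num at h0
    haveI : Nontrivial V := nontrivial_of_ne _ 0 hne
    exact Module.finrank_pos
  have hdne : (d : ℝ) ≠ 0 := Nat.cast_ne_zero.mpr hdpos.ne'
  have hpig : ∃ k : Fin d, (N : ℝ) / d ≤ ∑ n ∈ Tf, ‖⟪((b k : V) : H), normalizeSeq x n⟫‖ ^ 2 := by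
    by_contra hc
    push_neg at hc
    have hlt : ∑ k, ∑ n ∈ Tf, ‖⟪((b k : V) : H), normalizeSeq x n⟫‖ ^ 2
        < ∑ _k : Fin d, (N : ℝ) / d :=
      Finset.sum_lt_sum_of_nonempty (Finset.univ_nonempty_iff.mpr
        (Fin.pos_iff_nonempty.mp hdpos)) fun k _ => hc k
    rw [hsum] at hlt
    simp only [Finset.sum_const, Finset.card_univ, Fintype.card_fin, nsmul_eq_mul] at hlt
    rw [mul_div_cancel₀ _ hdne] at hlt
    exact lt_irrefl _ hlt
  obtain ⟨k, hk⟩ := hpig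
  set z : H := ((b k : V) : H) with hz'
  have hz : ‖z‖ = 1 := by
    have := b.orthonormal.1 k
    exact this
  have h1 := hB z
  have h2 : ENNReal.ofReal ((N : ℝ) / d) ≤ ∑' n, ENNReal.ofReal (‖⟪z, normalizeSeq x n⟫‖ ^ 2) := by
    calc ENNReal.ofReal ((N : ℝ) / d)
        ≤ ENNReal.ofReal (∑ n ∈ Tf, ‖⟪z, normalizeSeq x n⟫‖ ^ 2) := ENNReal.ofReal_le_ofReal hk
      _ = ∑ n ∈ Tf, ENNReal.ofReal (‖⟪z, normalizeSeq x n⟫‖ ^ 2) :=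
          ENNReal.ofReal_sum_of_nonneg fun n _ => by positivity
      _ ≤ _ := ENNReal.sum_le_tsum Tf
  have h3 : ENNReal.ofReal ((N : ℝ) / d) ≤ ENNReal.ofReal (B * ‖z‖ ^ 2) := le_trans h2 h1
  rw [hz] at h3
  norm_num at h3
  have h4 : (N : ℝ) / d ≤ B := (ENNReal.ofReal_le_ofReal_iff hB0).mp h3
  have hdD : d ≤ D := hdim i
  have h5 : (N : ℝ) ≤ B * d := (div_le_iff₀ (by positivity)).mp h4
  have h6 : (N : ℝ) ≤ B * D :=
    le_trans h5 (mul_le_mul_of_nonneg_left (Nat.cast_le.mpr hdD) hB0)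
  have h7 : B * D < (N : ℝ) := by
    rw [hN]; push_cast
    have : B * D ≤ ⌈B⌉₊ * D := by
      exact mul_le_mul_of_nonneg_right (Nat.le_ceil B) (Nat.cast_nonneg D)
    linarith
  linarith
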